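/- Let J be an m × m Jordan block over a field F of characteristic 2 with eigenvalue λ ≠ 0, i.e., J has λ on the diagonal, 1 on the superdiagonal, and 0 elsewhere. Let s be the least integer with m ≤ 2^s, and let t be the multiplicative order of λ. Then the least positive integer k with J^k = I is t·2^s. -/

import Mathlib

def jordanBlock (F : Type) [Field F] (m : ℕ) (l : F) : Matrix (Fin m) (Fin m) F :=
  Matrix.of fun i j => if i = j then l else if (i : ℕ) + 1 = (j : ℕ) then 1 else 0

/-- The nilpotent part of the Jordan block. -/
def nilMat (F : Type) [Field F] (m : ℕ) : Matrix (Fin m) (Fin m) F :=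
  Matrix.of fun i j => if (i : ℕ) + 1 = (j : ℕ) then 1 else 0

lemma jordan_eq (F : Type) [Field F] (m : ℕ) (lam : F) :
    jordanBlock F m lam = lam • 1 + nilMat F m := by
  ext i j
  simp only [jordanBlock, nilMat, Matrix.of_apply, Matrix.add_apply, Matrix.smul_apply,
    Matrix.one_apply, smul_eq_mul, mul_ite, mul_one, mul_zero]
  rcases eq_or_ne i j with h | h
  · subst h; simp
  · have : ¬ i = j := h
    simp [this]

lemma nilMat_pow (F : Type) [Field F] (m : ℕ) (i : ℕ) (a b : Fin m) :
    (nilMat F m ^ i) a b = if (a : ℕ) + i = (b : ℕ) then 1 else 0 := by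
  induction i generalizing b with
  | zero =>
    simp only [pow_zero, Matrix.one_apply, add_zero]
    congr 1
    simp [Fin.ext_iff, eq_comm]
  | succ i ih =>
    rw [pow_succ, Matrix.mul_apply]
    rcases lt_or_ge ((a : ℕ) + i) m with h | h
    · rw [Finset.sum_eq_single (⟨(a : ℕ) + i, h⟩ : Fin m)]
      · rw [ih]
        simp only [nilMat, Matrix.of_apply]
        simp [add_assoc]
      · intro c _ hc
        rw [ih]
        have : ¬ ((a : ℕ) + i = (c : ℕ)) := by
          intro hh; exact hc (by simp [Fin.ext_iff, ← hh])
        simp [this]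
      · intro h'; exact absurd (Finset.mem_univ _) h'
    · have h1 : ∀ c : Fin m, (nilMat F m ^ i) a c * (nilMat F m) c b = 0 := by
        intro c
        rw [ih]
        have : ¬ ((a : ℕ) + i = (c : ℕ)) := by
          have := c.isLt; omega
        simp [this]
      rw [Finset.sum_eq_zero (fun c _ => h1 c)]
      have : ¬ ((a : ℕ) + (i + 1) = (b : ℕ)) := by
        have := b.isLt; omega
      simp [this]

lemma nilMat_pow_eq_zero (F : Type) [Field F] (m : ℕ) {i : ℕ} (hi : m ≤ i) :
    nilMat F m ^ i = 0 := by
  ext a b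
  rw [nilMat_pow]
  have : ¬ ((a : ℕ) + i = (b : ℕ)) := by have := b.isLt; omega
  simp [this]

lemma commute_smul_one_nilMat (F : Type) [Field F] (m : ℕ) (lam : F) :
    Commute (lam • (1 : Matrix (Fin m) (Fin m) F)) (nilMat F m) := by
  unfold Commute SemiconjBy
  rw [smul_mul_assoc, one_mul, mul_smul_comm, mul_one]

/-- Lucas digit lemma for binomial coefficients at powers of two. -/
lemma choose_two_pow_mod_two (j : ℕ) : ∀ k : ℕ, k.choose (2 ^ j) % 2 = k / 2 ^ j % 2 := by
  induction j with
  | zero => intro k; simp [Nat.choose_one_right]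
  | succ j ih =>
    intro k
    have h := @Choose.choose_modEq_choose_mod_mul_choose_div_nat k (2 ^ (j + 1)) 2
      ⟨Nat.prime_two⟩
    have h1 : 2 ^ (j + 1) % 2 = 0 := by
      simp [pow_succ, Nat.mul_mod_left]
    have h2 : 2 ^ (j + 1) / 2 = 2 ^ j := by
      rw [pow_succ, Nat.mul_div_cancel]; omega
    rw [h1, h2, Nat.choose_zero_right, one_mul] at h
    rw [Nat.ModEq] at h
    rw [h, ih (k / 2), Nat.div_div_eq_div_mul]
    congr 1
    rw [pow_succ, mul_comm]

lemma two_pow_dvd_of_bits (s : ℕ) (k : ℕ) (h : ∀ j < s, k / 2 ^ j % 2 = 0) :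
    2 ^ s ∣ k := by
  induction s with
  | zero => simp
  | succ s ih =>
    obtain ⟨q, hq⟩ := ih (fun j hj => h j (by omega))
    have := h s (by omega)
    rw [hq, Nat.mul_div_cancel_left _ (pow_pos (by norm_num) s)] at this
    obtain ⟨r, hr⟩ := Nat.dvd_of_mod_eq_zero this
    exact ⟨r, by rw [hq, hr, pow_succ]; ring⟩

theorem stmt_2 (F : Type) [Field F] (hchar : CharP F 2) (m s t : ℕ) (hm : 0 < m)
    (lam : F) (hlam : lam ≠ 0) (ht : orderOf lam = t) (htpos : 0 < t)
    (hs : IsLeast {s : ℕ | m ≤ 2 ^ s} s) :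
    IsLeast {k : ℕ | 0 < k ∧ jordanBlock F m lam ^ k = 1} (t * 2 ^ s) := by
  haveI := hchar
  haveI : Nonempty (Fin m) := ⟨⟨0, hm⟩⟩
  haveI : Fact (Nat.Prime 2) := ⟨Nat.prime_two⟩
  have hc := commute_smul_one_nilMat F m lam
  -- Frobenius: J^(2^s) is scalar
  have hfrob : jordanBlock F m lam ^ 2 ^ s = (lam ^ 2 ^ s) • 1 := by
    rw [jordan_eq, add_pow_char_pow_of_commute _ _ hc,
      nilMat_pow_eq_zero F m hs.1, add_zero, smul_pow, one_pow]
  -- t is odd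
  have hodd : Odd t := by
    by_contra hev
    rw [Nat.not_odd_iff_even] at hev
    obtain ⟨u, hu⟩ := hev
    have hu2 : t = 2 * u := by omega
    have hupos : 0 < u := by omega
    have h2 : (1 : F) + 1 = 0 := by
      have := CharP.cast_eq_zero F 2
      push_cast at this
      linear_combination this
    have hsq : (lam ^ u + 1) ^ 2 = 0 := by
      rw [add_pow_char (lam ^ u) 1 2]
      rw [← pow_mul, mul_comm u 2, ← hu2, ← ht, pow_orderOf_eq_one, one_pow, h2]
    have hzero : lam ^ u + 1 = 0 := by
      exact pow_eq_zero_iff (by norm_num) |>.mp hsq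
    have : lam ^ u = 1 := by
      linear_combination hzero - h2
    have hdvd : t ∣ u := ht ▸ orderOf_dvd_of_pow_eq_one this
    have := Nat.le_of_dvd hupos hdvd
    omega
  -- binomial expansion of J^k, row 0
  have hrow : ∀ (k : ℕ) (b : Fin m),
      (jordanBlock F m lam ^ k) ⟨0, hm⟩ b = (k.choose b : F) * lam ^ (k - (b : ℕ)) := by
    intro k b
    have expand : jordanBlock F m lam ^ k =
        ∑ i ∈ Finset.range (k + 1),
          ((k.choose i : F) * lam ^ i) • (nilMat F m) ^ (k - i) := by
      rw [jordan_eq, hc.add_pow]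
      refine Finset.sum_congr rfl fun i _ => ?_
      rw [smul_pow, one_pow, smul_mul_assoc, one_mul,
        ← (Nat.cast_commute (k.choose i) (lam ^ i • nilMat F m ^ (k - i))).eq,
        ← nsmul_eq_mul, ← Nat.cast_smul_eq_nsmul F, smul_smul]
    rw [expand, Matrix.sum_apply]
    simp only [Matrix.smul_apply, nilMat_pow, smul_eq_mul, mul_ite, mul_one, mul_zero]
    have hval : ((⟨0, hm⟩ : Fin m) : ℕ) = 0 := rfl
    rcases le_or_gt (b : ℕ) k with hb | hb
    · rw [Finset.sum_eq_single (k - (b : ℕ))]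
      · have hcond : ((⟨0, hm⟩ : Fin m) : ℕ) + (k - (k - (b : ℕ))) = (b : ℕ) := by
          rw [hval]; omega
        rw [if_pos hcond, Nat.choose_symm hb]
      · intro i hi hne
        rw [Finset.mem_range] at hi
        have : ¬ (k - i = (b : ℕ)) := by omega
        simp [this]
      · intro h; exact absurd (Finset.mem_range.mpr (by omega)) h
    · rw [Finset.sum_eq_zero, Nat.choose_eq_zero_of_lt hb]
      · simp
      · intro i hi
        rw [Finset.mem_range] at hi
        have : ¬ (k - i = (b : ℕ)) := by omega
        simp [this]
  constructor
  · -- membership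
    refine ⟨by positivity, ?_⟩
    rw [mul_comm, pow_mul, hfrob, smul_pow, one_pow, ← pow_mul, mul_comm, pow_mul,
      ← ht, pow_orderOf_eq_one, one_pow, one_smul]
  · -- lower bound
    rintro k ⟨hkpos, hk⟩
    have hl : ∀ b : Fin m, (k.choose b : F) * lam ^ (k - (b : ℕ)) =
        (1 : Matrix (Fin m) (Fin m) F) ⟨0, hm⟩ b := fun b => by rw [← hrow k b, hk]
    -- t ∣ k
    have htk : t ∣ k := by
      have h0 := hl ⟨0, hm⟩
      rw [Matrix.one_apply_eq] at h0
      simp only [Nat.choose_zero_right, Nat.cast_one, one_mul] at h0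
      have : lam ^ k = 1 := by simpa using h0
      exact ht ▸ orderOf_dvd_of_pow_eq_one this
    -- 2^s ∣ k
    have h2k : 2 ^ s ∣ k := by
      apply two_pow_dvd_of_bits
      intro j hj
      have hjm : 2 ^ j < m := by
        by_contra hge
        push_neg at hge
        exact absurd (hs.2 hge) (by omega)
      have hb := hl ⟨2 ^ j, hjm⟩
      have hne : (⟨0, hm⟩ : Fin m) ≠ ⟨2 ^ j, hjm⟩ := by
        simp [Fin.ext_iff]
        positivity
      rw [Matrix.one_apply_ne hne] at hb
      have hcast : (k.choose (2 ^ j) : F) = 0 := by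
        rcases mul_eq_zero.mp hb with h | h
        · exact h
        · exact absurd h (pow_ne_zero _ hlam)
      have hdvd2 : (2 : ℕ) ∣ k.choose (2 ^ j) :=
        (CharP.cast_eq_zero_iff F 2 _).mp (by exact_mod_cast hcast)
      have := choose_two_pow_mod_two j k
      omega
    have hcop : Nat.Coprime t (2 ^ s) := by
      have h2t : ¬ (2 ∣ t) := by rw [Nat.odd_iff] at hodd; omega
      exact ((Nat.prime_two.coprime_iff_not_dvd).mpr h2t).symm.pow_right s
    exact Nat.le_of_dvd hkpos (hcop.mul_dvd_of_dvd_of_dvd htk h2k)
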